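/- Let p1, p2, p3 and q1, q2, q3 be affinely independent triples in the Euclidean plane ℝ², w ∈ ℝ³, and let φ be the circumcircle-preserving projective map determined by these triples and w. If x, y, z are three collinear points of the plane at each of which φ is defined (i.e. the denominator is nonzero), then φ(x), φ(y), φ(z) are collinear. In particular, within a triangle φ maps straight segments to straight segments. -/

import Mathlib

/-- If the first coefficient of a nontrivial affine relation is nonzero, the three
points are collinear. -/
lemma collinear_of_rel_fst {V : Type*} [AddCommGroup V] [Module ℝ V]
    {x y z : V} {a b c : ℝ} (ha : a ≠ 0)
    (hsum : a + b + c = 0) (hrel : a • x + b • y + c • z = 0) :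
    Collinear ℝ ({x, y, z} : Set V) := by
  have hx : x = (-(c/a)) • (z - y) + y := by
    have h1 : a • ((-(c/a)) • (z - y) + y) = a • x := by
      have h2 : a • x = (-b) • y + (-c) • z := by
        linear_combination (norm := module) hrel
      rw [h2]
      match_scalars
      all_goals field_simp
      all_goals linarith
    exact (smul_right_injective V ha h1).symm
  apply collinear_insert_of_mem_affineSpan_pair
  exact hx ▸ smul_vsub_vadd_mem_affineSpan_pair (k := ℝ) (-(c/a)) y z

/-- From a nontrivial affine relation, deduce collinearity. -/
lemma collinear_of_rel {V : Type*} [AddCommGroup V] [Module ℝ V]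
    {x y z : V} {a b c : ℝ} (hne : ¬(a = 0 ∧ b = 0 ∧ c = 0))
    (hsum : a + b + c = 0) (hrel : a • x + b • y + c • z = 0) :
    Collinear ℝ ({x, y, z} : Set V) := by
  by_cases ha : a = 0
  · by_cases hb : b = 0
    · have hc : c ≠ 0 := fun hc => hne ⟨ha, hb, hc⟩
      have : Collinear ℝ ({z, x, y} : Set V) :=
        collinear_of_rel_fst (a := c) (b := a) (c := b) hc (by linarith)
          (by linear_combination (norm := module) hrel)
      have hset : ({z, x, y} : Set V) = {x, y, z} := by
        ext u; simp only [Set.mem_insert_iff, Set.mem_singleton_iff]; tauto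
      rwa [hset] at this
    · have : Collinear ℝ ({y, x, z} : Set V) :=
        collinear_of_rel_fst (a := b) (b := a) (c := c) hb (by linarith)
          (by linear_combination (norm := module) hrel)
      have hset : ({y, x, z} : Set V) = {x, y, z} := by
        ext u; simp only [Set.mem_insert_iff, Set.mem_singleton_iff]; tauto
      rwa [hset] at this
  · exact collinear_of_rel_fst ha hsum hrel

/-- From collinearity of three points in a real vector space, extract a nontrivial
affine relation. -/
lemma rel_of_collinear {V : Type*} [AddCommGroup V] [Module ℝ V]
    {x y z : V} (h : Collinear ℝ ({x, y, z} : Set V)) :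
    ∃ a b c : ℝ, ¬(a = 0 ∧ b = 0 ∧ c = 0) ∧ a + b + c = 0 ∧
      a • x + b • y + c • z = 0 := by
  have hx : x ∈ ({x, y, z} : Set V) := by simp
  obtain ⟨v, hv⟩ := (collinear_iff_of_mem hx).1 h
  obtain ⟨ty, hty⟩ := hv y (by simp)
  obtain ⟨tz, htz⟩ := hv z (by simp)
  simp only [vadd_eq_add] at hty htz
  by_cases hyx : y = x
  · exact ⟨1, -1, 0, by norm_num, by ring, by
      rw [hyx]; simp [← add_smul]⟩
  · have hty0 : ty ≠ 0 := by
      intro h0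
      apply hyx
      rw [hty, h0, zero_smul, zero_add]
    refine ⟨ty - tz, tz, -ty, ?_, by ring, ?_⟩
    · intro ⟨_, _, hc⟩
      exact hty0 (by linarith [neg_eq_zero.1 hc])
    · rw [hty, htz]
      module

theorem ccp_map_preserves_collinearity
    (p q : Fin 3 → EuclideanSpace ℝ (Fin 2))
    (hp : AffineIndependent ℝ p) (hq : AffineIndependent ℝ q)
    (w : Fin 3 → ℝ)
    (x y z : EuclideanSpace ℝ (Fin 2))
    (hcol : Collinear ℝ ({x, y, z} : Set (EuclideanSpace ℝ (Fin 2))))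
    (ux uy uz : Fin 3 → ℝ)
    (hux : ∑ i, ux i = 1) (hx : x = ∑ i, ux i • p i)
    (huy : ∑ i, uy i = 1) (hy : y = ∑ i, uy i • p i)
    (huz : ∑ i, uz i = 1) (hzz : z = ∑ i, uz i • p i)
    (zx zy zz : ℝ)
    (hzx : zx = ∑ i, ux i * Real.exp (-2 * w i)) (hzx0 : zx ≠ 0)
    (hzy : zy = ∑ i, uy i * Real.exp (-2 * w i)) (hzy0 : zy ≠ 0)
    (hzzz : zz = ∑ i, uz i * Real.exp (-2 * w i)) (hzz0 : zz ≠ 0) :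
    Collinear ℝ ({∑ i, (ux i * Real.exp (-2 * w i) / zx) • q i,
                  ∑ i, (uy i * Real.exp (-2 * w i) / zy) • q i,
                  ∑ i, (uz i * Real.exp (-2 * w i) / zz) • q i} :
      Set (EuclideanSpace ℝ (Fin 2))) := by
  obtain ⟨a, b, c, hne, hsum, hrel⟩ := rel_of_collinear hcol
  -- componentwise relation on barycentric coordinates
  have hcomp : ∀ i, a * ux i + b * uy i + c * uz i = 0 := by
    have h0 : ∑ i, (a * ux i + b * uy i + c * uz i) = 0 := by
      simp only [Finset.sum_add_distrib, ← Finset.mul_sum, hux, huy, huz]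
      linarith
    have h1 : ∑ i, (a * ux i + b * uy i + c * uz i) • p i = 0 := by
      have : ∑ i, (a * ux i + b * uy i + c * uz i) • p i
          = a • x + b • y + c • z := by
        rw [hx, hy, hzz, Finset.smul_sum, Finset.smul_sum, Finset.smul_sum,
          ← Finset.sum_add_distrib, ← Finset.sum_add_distrib]
        refine Finset.sum_congr rfl fun i _ => ?_
        rw [add_smul, add_smul, smul_smul, smul_smul, smul_smul]
      rw [this, hrel]
    intro i
    exact affineIndependent_iff.1 hp Finset.univ _ h0 h1 i (Finset.mem_univ i)
  refine collinear_of_rel (a := a * zx) (b := b * zy) (c := c * zz) ?_ ?_ ?_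
  · intro ⟨ha, hb, hc⟩
    exact hne ⟨by rcases mul_eq_zero.1 ha with h | h; exact h; exact absurd h hzx0,
               by rcases mul_eq_zero.1 hb with h | h; exact h; exact absurd h hzy0,
               by rcases mul_eq_zero.1 hc with h | h; exact h; exact absurd h hzz0⟩
  · rw [hzx, hzy, hzzz, Finset.mul_sum, Finset.mul_sum, Finset.mul_sum,
      ← Finset.sum_add_distrib, ← Finset.sum_add_distrib]
    exact Finset.sum_eq_zero fun i _ => by
      linear_combination Real.exp (-2 * w i) * hcomp i
  · rw [Finset.smul_sum, Finset.smul_sum, Finset.smul_sum,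
      ← Finset.sum_add_distrib, ← Finset.sum_add_distrib]
    refine Finset.sum_eq_zero fun i _ => ?_
    rw [smul_smul, smul_smul, smul_smul, ← add_smul, ← add_smul]
    have h1 : a * zx * (ux i * Real.exp (-2 * w i) / zx) =
        a * ux i * Real.exp (-2 * w i) := by field_simp
    have h2 : b * zy * (uy i * Real.exp (-2 * w i) / zy) =
        b * uy i * Real.exp (-2 * w i) := by field_simp
    have h3 : c * zz * (uz i * Real.exp (-2 * w i) / zz) =
        c * uz i * Real.exp (-2 * w i) := by field_simp
    have hco : a * zx * (ux i * Real.exp (-2 * w i) / zx) +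
        b * zy * (uy i * Real.exp (-2 * w i) / zy) +
        c * zz * (uz i * Real.exp (-2 * w i) / zz) = 0 := by
      rw [h1, h2, h3]
      linear_combination Real.exp (-2 * w i) * hcomp i
    rw [hco, zero_smul]
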